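/- Let A be a unital algebra over a commutative ℚ-algebra k with k → A split, let Ω_t = ΩA ∗_k k[t] be the extended forms algebra, DR_t = Ω_t/[Ω_t,Ω_t], and i_t the super-derivation of Ω_t with i_t(t) = 0, i_t(a) = 0 for a ∈ A, and i_t(da) = [a,t] = at − ta. Then i_t² = 0 on Ω_t, and i_t descends to a map on DR_t that anti-commutes with the de Rham differential d (which kills t): d∘i_t + i_t∘d = 0 on DR_t. -/

import Mathlib

set_option linter.unusedSectionVars false
set_option maxHeartbeats 1000000

namespace Stmt16

structure Setup (k A Ω : Type) [CommRing k] [Algebra ℚ k] [Ring A] [Algebra k A]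
    [Ring Ω] [Algebra k Ω] where
  ι : A →ₐ[k] Ω
  T : Ω
  d : Ω →ₗ[k] Ω
  G : ℕ → Submodule k Ω
  it : Ω →ₗ[k] Ω
  hι0 : ∀ a : A, ι a ∈ G 0
  hT0 : T ∈ G 0
  hGmul : ∀ m n : ℕ, ∀ x ∈ G m, ∀ y ∈ G n, x * y ∈ G (m + n)
  hdG : ∀ n : ℕ, ∀ x ∈ G n, d x ∈ G (n + 1)
  hdd : ∀ x : Ω, d (d x) = 0
  hdT : d T = 0
  hleib : ∀ (m : ℕ) (x : Ω), x ∈ G m → ∀ y : Ω,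
      d (x * y) = d x * y + ((-1 : ℤ) ^ m) • (x * d y)
  htop : Submodule.span k {w : Ω | ∃ L : List Ω,
        (∀ z ∈ L, z = T ∨ (∃ a : A, z = ι a) ∨ ∃ a : A, z = d (ι a)) ∧
        w = L.prod} = ⊤
  hsup : (⨆ n, G n) = ⊤
  hitT : it T = 0
  hitι : ∀ a : A, it (ι a) = 0
  hitd : ∀ a : A, it (d (ι a)) = ι a * T - T * ι a
  hitder : ∀ (m : ℕ) (x : Ω), x ∈ G m → ∀ y : Ω,
      it (x * y) = it x * y + ((-1 : ℤ) ^ m) • (x * it y)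

namespace Setup

variable {k A Ω : Type} [CommRing k] [Algebra ℚ k] [Ring A] [Algebra k A]
    [Ring Ω] [Algebra k Ω] (S : Setup k A Ω)

/-- a valid labeled letter -/
def Lok (p : Ω × ℕ) : Prop :=
  (p.2 = 0 ∧ (p.1 = S.T ∨ ∃ a, p.1 = S.ι a)) ∨ (p.2 = 1 ∧ ∃ a, p.1 = S.d (S.ι a))

/-- words of degree n -/
def Wd (n : ℕ) : Set Ω :=
  {w | ∃ L : List (Ω × ℕ), (∀ p ∈ L, S.Lok p) ∧ w = (L.map Prod.fst).prod ∧
    n = (L.map Prod.snd).sum}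

/-- span of words of parity r -/
def SpP (r : ℕ) : Submodule k Ω :=
  Submodule.span k {w | ∃ n, n % 2 = r ∧ w ∈ S.Wd n}

/-- the supercommutator span -/
def C : Submodule k Ω :=
  Submodule.span k {c : Ω | ∃ (m n : ℕ) (y z : Ω),
    y ∈ S.G m ∧ z ∈ S.G n ∧ c = y * z - ((-1 : ℤ) ^ (m * n)) • (z * y)}

section half

theorem half_mem (M : Submodule k Ω) {x : Ω} (h : (2 : ℤ) • x ∈ M) : x ∈ M := by
  have h2 : (2 : ℤ) • x = x + x := two_smul ℤ x
  rw [h2] at h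
  have h3 := M.smul_mem (algebraMap ℚ k (2⁻¹)) h
  rwa [smul_add, ← add_smul, ← map_add, show (2⁻¹ + 2⁻¹ : ℚ) = 1 by norm_num,
    map_one, one_smul] at h3

theorem neg_one_pow_congr {p q : ℕ} (h : p % 2 = q % 2) : ((-1 : ℤ)) ^ p = (-1) ^ q := by
  rcases Nat.even_or_odd p with hp | hp
  · have hq : Even q := by rw [Nat.even_iff] at *; omega
    rw [hp.neg_one_pow, hq.neg_one_pow]
  · have hq : Odd q := by rw [Nat.odd_iff] at *; omega
    rw [hp.neg_one_pow, hq.neg_one_pow]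

theorem neg_one_pow_succ (p : ℕ) : ((-1 : ℤ)) ^ ((p + 1) % 2) = -(-1) ^ (p % 2) := by
  rcases Nat.even_or_odd p with hp | hp
  · rw [Nat.even_iff] at hp
    have h1 : (p + 1) % 2 = 1 := by omega
    rw [h1, hp]; norm_num
  · rw [Nat.odd_iff] at hp
    have h1 : (p + 1) % 2 = 0 := by omega
    rw [h1, hp]; norm_num

end half

include S in
theorem two_cancel {x : Ω} (h : (2 : ℤ) • x = 0) : x = 0 := by
  have hb : (2 : ℤ) • x ∈ (⊥ : Submodule k Ω) := by rw [h]; exact Submodule.zero_mem ⊥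
  simpa using half_mem ⊥ hb

theorem one_G0 : (1 : Ω) ∈ S.G 0 := by
  have := S.hι0 1
  rwa [map_one] at this

theorem d_one : S.d 1 = 0 := by
  have h := S.hleib 0 1 S.one_G0 1
  simp only [one_mul, mul_one, pow_zero, one_smul] at h
  linear_combination (norm := abel) -h

theorem it_one : S.it 1 = 0 := by
  have := S.hitι 1
  rwa [map_one] at this

theorem wd_one : (1 : Ω) ∈ S.Wd 0 := by
  exact ⟨[], by simp, by simp, by simp⟩

theorem wd_cons0 {z : Ω} (hz : z = S.T ∨ ∃ a, z = S.ι a) {w : Ω} {n : ℕ}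
    (hw : w ∈ S.Wd n) : z * w ∈ S.Wd n := by
  obtain ⟨L, hL, hwp, hns⟩ := hw
  refine ⟨(z, 0) :: L, ?_, ?_, ?_⟩
  · intro p hp
    rcases List.mem_cons.1 hp with h | h
    · subst h; exact Or.inl ⟨rfl, hz⟩
    · exact hL p h
  · simp [hwp]
  · simp [hns]

theorem wd_cons1 {z : Ω} (hz : ∃ a, z = S.d (S.ι a)) {w : Ω} {n : ℕ}
    (hw : w ∈ S.Wd n) : z * w ∈ S.Wd (n + 1) := by
  obtain ⟨L, hL, hwp, hns⟩ := hw
  refine ⟨(z, 1) :: L, ?_, ?_, ?_⟩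
  · intro p hp
    rcases List.mem_cons.1 hp with h | h
    · subst h; exact Or.inr ⟨rfl, hz⟩
    · exact hL p h
  · simp [hwp]
  · simp [hns]; omega

theorem wd_mul {w1 w2 : Ω} {p q : ℕ} (h1 : w1 ∈ S.Wd p) (h2 : w2 ∈ S.Wd q) :
    w1 * w2 ∈ S.Wd (p + q) := by
  obtain ⟨L1, hL1, hw1, hn1⟩ := h1
  obtain ⟨L2, hL2, hw2, hn2⟩ := h2
  refine ⟨L1 ++ L2, ?_, ?_, ?_⟩
  · intro p hp
    rcases List.mem_append.1 hp with h | h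
    · exact hL1 p h
    · exact hL2 p h
  · simp [hw1, hw2]
  · simp [hn1, hn2]

theorem wd_G {w : Ω} {n : ℕ} (hw : w ∈ S.Wd n) : w ∈ S.G n := by
  obtain ⟨L, hL, hwp, hns⟩ := hw
  subst hwp; subst hns
  induction L with
  | nil => simpa using S.one_G0
  | cons p L ih =>
    have hG : p.1 ∈ S.G p.2 := by
      rcases hL p (List.mem_cons_self (a := p) (l := L)) with ⟨h2, h1⟩ | ⟨h2, a, h1⟩
      · rw [h2]
        rcases h1 with h | ⟨a, h⟩
        · rw [h]; exact S.hT0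
        · rw [h]; exact S.hι0 a
      · rw [h2, h1]
        exact S.hdG 0 _ (S.hι0 a)
    simpa using S.hGmul _ _ _ hG _ (ih (fun q hq => hL q (List.mem_cons_of_mem p hq)))

theorem wd_sp {w : Ω} {n : ℕ} (hw : w ∈ S.Wd n) : w ∈ S.SpP (n % 2) := by
  exact Submodule.subset_span ⟨n, rfl, hw⟩

/-- facts about degree-0 letters -/
theorem letter0 {z : Ω} (hz : z = S.T ∨ ∃ a, z = S.ι a) :
    z ∈ S.G 0 ∧ S.it z = 0 ∧ S.it (S.d z) = z * S.T - S.T * z := by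
  rcases hz with h | ⟨a, h⟩
  · subst h
    exact ⟨S.hT0, S.hitT, by rw [S.hdT, map_zero, sub_self]⟩
  · subst h
    exact ⟨S.hι0 a, S.hitι a, S.hitd a⟩

/-- facts about degree-1 letters -/
theorem letter1 {z : Ω} (hz : ∃ a, z = S.d (S.ι a)) :
    z ∈ S.G 1 ∧ S.it z ∈ S.G 0 ∧ S.it (S.it z) = 0 ∧
      S.d (S.it z) = z * S.T - S.T * z ∧ S.d z = 0 ∧
      ∀ {w : Ω} {n : ℕ}, w ∈ S.Wd n → S.it z * w ∈ S.SpP (n % 2) := by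
  obtain ⟨a, rfl⟩ := hz
  have hG1 : S.d (S.ι a) ∈ S.G 1 := S.hdG 0 _ (S.hι0 a)
  have hitz : S.it (S.d (S.ι a)) = S.ι a * S.T - S.T * S.ι a := S.hitd a
  have hG0 : S.it (S.d (S.ι a)) ∈ S.G 0 := by
    rw [hitz]
    exact sub_mem (S.hGmul 0 0 _ (S.hι0 a) _ S.hT0) (S.hGmul 0 0 _ S.hT0 _ (S.hι0 a))
  refine ⟨hG1, hG0, ?_, ?_, S.hdd _, ?_⟩
  · rw [hitz, map_sub, S.hitder 0 _ (S.hι0 a) S.T, S.hitder 0 _ S.hT0 (S.ι a),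
      S.hitι a, S.hitT]
    simp
  · rw [hitz, map_sub, S.hleib 0 _ (S.hι0 a) S.T, S.hleib 0 _ S.hT0 (S.ι a), S.hdT]
    simp
  · intro w n hw
    have h1 : S.ι a * (S.T * w) ∈ S.Wd n := S.wd_cons0 (Or.inr ⟨a, rfl⟩) (S.wd_cons0 (Or.inl rfl) hw)
    have h2 : S.T * (S.ι a * w) ∈ S.Wd n := S.wd_cons0 (Or.inl rfl) (S.wd_cons0 (Or.inr ⟨a, rfl⟩) hw)
    rw [hitz, sub_mul, mul_assoc, mul_assoc]
    exact sub_mem (S.wd_sp h1) (S.wd_sp h2)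

theorem sp_mul_letter0 {z : Ω} (hz : z = S.T ∨ ∃ a, z = S.ι a) {r : ℕ} {e : Ω}
    (he : e ∈ S.SpP r) : z * e ∈ S.SpP r := by
  refine Submodule.span_induction (fun w hw => ?_) (by rw [mul_zero]; exact zero_mem _)
    (fun x y _ _ hx hy => by rw [mul_add]; exact add_mem hx hy)
    (fun c x _ hx => by rw [mul_smul_comm]; exact Submodule.smul_mem _ c hx) he
  obtain ⟨nw, hmod, hw⟩ := hw
  exact Submodule.subset_span ⟨nw, hmod, S.wd_cons0 hz hw⟩

theorem sp_mul_letter1 {z : Ω} (hz : ∃ a, z = S.d (S.ι a)) {r : ℕ} {e : Ω}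
    (he : e ∈ S.SpP r) : z * e ∈ S.SpP ((r + 1) % 2) := by
  refine Submodule.span_induction (fun w hw => ?_) (by rw [mul_zero]; exact zero_mem _)
    (fun x y _ _ hx hy => by rw [mul_add]; exact add_mem hx hy)
    (fun c x _ hx => by rw [mul_smul_comm]; exact Submodule.smul_mem _ c hx) he
  obtain ⟨nw, hmod, hw⟩ := hw
  exact Submodule.subset_span ⟨nw + 1, by omega, S.wd_cons1 hz hw⟩

/-- the master induction over words -/
theorem word_main : ∀ L : List (Ω × ℕ), (∀ p ∈ L, S.Lok p) →
    (L.map Prod.fst).prod ∈ S.G ((L.map Prod.snd).sum) ∧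
    S.it (S.it ((L.map Prod.fst).prod)) = 0 ∧
    S.d (S.it ((L.map Prod.fst).prod)) + S.it (S.d ((L.map Prod.fst).prod)) =
      (L.map Prod.fst).prod * S.T - S.T * (L.map Prod.fst).prod ∧
    S.it ((L.map Prod.fst).prod) ∈ S.SpP (((L.map Prod.snd).sum + 1) % 2) := by
  intro L
  induction L with
  | nil =>
    intro _
    simp only [List.map_nil, List.prod_nil, List.sum_nil]
    refine ⟨S.one_G0, ?_, ?_, ?_⟩
    · rw [S.it_one, map_zero]
    · rw [S.it_one, map_zero, S.d_one, map_zero, one_mul, mul_one, sub_self, add_zero]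
    · rw [S.it_one]; exact Submodule.zero_mem _
  | cons p L ih =>
    intro hL
    obtain ⟨huG, hitu2, hcart, hsp⟩ := ih (fun q hq => hL q (List.mem_cons_of_mem p hq))
    have huW : (L.map Prod.fst).prod ∈ S.Wd ((L.map Prod.snd).sum) :=
      ⟨L, fun q hq => hL q (List.mem_cons_of_mem p hq), rfl, rfl⟩
    set u := (L.map Prod.fst).prod with hu_def
    set n := (L.map Prod.snd).sum with hn_def
    have hcart' : S.it (S.d u) = u * S.T - S.T * u - S.d (S.it u) := by
      rw [← hcart]; abel
    simp only [List.map_cons, List.prod_cons, List.sum_cons]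
    rcases hL p (List.mem_cons_self (a := p) (l := L)) with ⟨h2, h1⟩ | ⟨h2, h1⟩
    · -- degree-0 letter
      rw [h2]
      set z := p.1 with hz_def
      obtain ⟨hzG, hitz, hitdz⟩ := S.letter0 h1
      have hdzG : S.d z ∈ S.G 1 := S.hdG 0 z hzG
      have h_it_zu : S.it (z * u) = z * S.it u := by
        rw [S.hitder 0 z hzG u, hitz]; simp
      have h_d_zu : S.d (z * u) = S.d z * u + z * S.d u := by
        rw [S.hleib 0 z hzG u]; simp
      refine ⟨S.hGmul 0 n z hzG u huG, ?_, ?_, ?_⟩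
      · rw [h_it_zu, S.hitder 0 z hzG, hitz, hitu2]; simp
      · have e1 : S.d (z * S.it u) = S.d z * S.it u + z * S.d (S.it u) := by
          rw [S.hleib 0 z hzG]; simp
        have e2 : S.it (S.d z * u) = S.it (S.d z) * u - S.d z * S.it u := by
          rw [S.hitder 1 _ hdzG u]
          simp [pow_one, neg_one_zsmul, sub_eq_add_neg]
        have e3 : S.it (z * S.d u) = z * S.it (S.d u) := by
          rw [S.hitder 0 z hzG, hitz]; simp
        rw [h_it_zu, h_d_zu, map_add, e1, e2, e3, hitdz, hcart']
        noncomm_ring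
      · rw [h_it_zu]
        have : (0 + n + 1) % 2 = (n + 1) % 2 := by omega
        rw [this]
        exact S.sp_mul_letter0 h1 hsp
    · -- degree-1 letter
      rw [h2]
      set z := p.1 with hz_def
      obtain ⟨hzG1, hitzG0, hitz2, hds, hdz0, hsmul⟩ := S.letter1 h1
      have h_it_zu : S.it (z * u) = S.it z * u - z * S.it u := by
        rw [S.hitder 1 z hzG1 u]
        simp [pow_one, neg_one_zsmul, sub_eq_add_neg]
      have h_d_zu : S.d (z * u) = -(z * S.d u) := by
        rw [S.hleib 1 z hzG1 u, hdz0]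
        simp [pow_one, neg_one_zsmul]
      refine ⟨S.hGmul 1 n z hzG1 u huG, ?_, ?_, ?_⟩
      · rw [h_it_zu, map_sub, S.hitder 0 _ hitzG0 u, hitz2,
          S.hitder 1 z hzG1 (S.it u), hitu2]
        simp
      · have e1 : S.d (S.it z * u) = S.d (S.it z) * u + S.it z * S.d u := by
          rw [S.hleib 0 _ hitzG0]; simp
        have e2 : S.d (z * S.it u) = -(z * S.d (S.it u)) := by
          rw [S.hleib 1 z hzG1, hdz0]
          simp [pow_one, neg_one_zsmul]
        have e3 : S.it (z * S.d u) = S.it z * S.d u - z * S.it (S.d u) := by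
          rw [S.hitder 1 z hzG1]
          simp [pow_one, neg_one_zsmul, sub_eq_add_neg]
        rw [h_it_zu, h_d_zu, map_sub, map_neg, e1, e2, e3, hds, hcart']
        noncomm_ring
      · rw [h_it_zu]
        have hx1 : S.it z * u ∈ S.SpP (n % 2) := hsmul huW
        have hx2 : z * S.it u ∈ S.SpP (((n + 1) % 2 + 1) % 2) := S.sp_mul_letter1 h1 hsp
        have hmod : ((n + 1) % 2 + 1) % 2 = n % 2 := by omega
        rw [hmod] at hx2
        have hmod2 : (1 + n + 1) % 2 = n % 2 := by omega
        rw [hmod2]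
        exact sub_mem hx1 hx2

theorem wd_top : Submodule.span k {w : Ω | ∃ n, w ∈ S.Wd n} = ⊤ := by
  have key : ∀ L : List Ω,
      (∀ z ∈ L, z = S.T ∨ (∃ a : A, z = S.ι a) ∨ ∃ a : A, z = S.d (S.ι a)) →
      ∃ n, L.prod ∈ S.Wd n := by
    intro L
    induction L with
    | nil => exact fun _ => ⟨0, by simpa using S.wd_one⟩
    | cons z L ih =>
      intro hL
      obtain ⟨n, hn⟩ := ih (fun q hq => hL q (List.mem_cons_of_mem z hq))
      rcases hL z (List.mem_cons_self (a := z) (l := L)) with h | h | h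
      · exact ⟨n, by rw [List.prod_cons]; exact S.wd_cons0 (Or.inl h) hn⟩
      · exact ⟨n, by rw [List.prod_cons]; exact S.wd_cons0 (Or.inr h) hn⟩
      · exact ⟨n + 1, by rw [List.prod_cons]; exact S.wd_cons1 h hn⟩
  rw [eq_top_iff, ← S.htop]
  apply Submodule.span_mono
  rintro w ⟨L, hL, rfl⟩
  exact key L hL

theorem sp_top : S.SpP 0 ⊔ S.SpP 1 = ⊤ := by
  rw [eq_top_iff, ← S.wd_top, Submodule.span_le]
  rintro w ⟨n, hw⟩
  have := S.wd_sp hw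
  rcases Nat.mod_two_eq_zero_or_one n with h | h
  · rw [h] at this; exact Submodule.mem_sup_left this
  · rw [h] at this; exact Submodule.mem_sup_right this

theorem it_der_sp {r : ℕ} {e : Ω} (he : e ∈ S.SpP r) (x : Ω) :
    S.it (e * x) = S.it e * x + ((-1 : ℤ) ^ r) • (e * S.it x) := by
  refine Submodule.span_induction (fun w hw => ?_) (by simp)
    (fun a b _ _ ha hb => ?_) (fun c a _ ha => ?_) he
  · obtain ⟨nw, hmod, hw⟩ := hw
    rw [S.hitder nw w (S.wd_G hw) x, neg_one_pow_congr (p := nw) (q := r) (by omega)]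
  · simp only [add_mul, map_add, smul_add]
    rw [ha, hb]; abel
  · rw [smul_mul_assoc, map_smul, ha, map_smul]
    simp only [smul_add, smul_mul_assoc]
    rw [smul_comm]

theorem d_der_sp' {r : ℕ} {e : Ω} (he : e ∈ S.SpP r) (x : Ω) :
    S.d (e * x) = S.d e * x + ((-1 : ℤ) ^ r) • (e * S.d x) := by
  refine Submodule.span_induction (fun w hw => ?_) (by simp)
    (fun a b _ _ ha hb => ?_) (fun c a _ ha => ?_) he
  · obtain ⟨nw, hmod, hw⟩ := hw
    rw [S.hleib nw w (S.wd_G hw) x, neg_one_pow_congr (p := nw) (q := r) (by omega)]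
  · simp only [add_mul, map_add, smul_add]
    rw [ha, hb]; abel
  · rw [smul_mul_assoc, map_smul, ha, map_smul]
    simp only [smul_add, smul_mul_assoc]
    rw [smul_comm]

theorem sp_mul_word {r q : ℕ} {e w : Ω} (he : e ∈ S.SpP r) (hw : w ∈ S.Wd q) :
    e * w ∈ S.SpP ((r + q) % 2) := by
  refine Submodule.span_induction (fun u hu => ?_) (by rw [zero_mul]; exact zero_mem _)
    (fun a b _ _ ha hb => by rw [add_mul]; exact add_mem ha hb)
    (fun c a _ ha => by rw [smul_mul_assoc]; exact Submodule.smul_mem _ c ha) he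
  obtain ⟨nu, hmod, hu⟩ := hu
  exact Submodule.subset_span ⟨nu + q, by omega, S.wd_mul hu hw⟩

theorem it_sp {r : ℕ} {e : Ω} (he : e ∈ S.SpP r) : S.it e ∈ S.SpP ((r + 1) % 2) := by
  refine Submodule.span_induction (fun w hw => ?_) (by rw [map_zero]; exact zero_mem _)
    (fun a b _ _ ha hb => by rw [map_add]; exact add_mem ha hb)
    (fun c a _ ha => by rw [map_smul]; exact Submodule.smul_mem _ c ha) he
  obtain ⟨nw, hmod, hw⟩ := hw
  obtain ⟨L, hL, rfl, rfl⟩ := hw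
  have := (S.word_main L hL).2.2.2
  rwa [show ((L.map Prod.snd).sum + 1) % 2 = (r + 1) % 2 by omega] at this

theorem comm_sp_G {r : ℕ} {e : Ω} (he : e ∈ S.SpP r) {n : ℕ} {z : Ω} (hz : z ∈ S.G n) :
    e * z - ((-1 : ℤ) ^ (r * n)) • (z * e) ∈ S.C := by
  refine Submodule.span_induction (fun w hw => ?_) (by simpa using zero_mem S.C)
    (fun a b _ _ ha hb => ?_) (fun c a _ ha => ?_) he
  · obtain ⟨pw, hmod, hw⟩ := hw
    have hsgn : ((-1 : ℤ)) ^ (pw * n) = (-1) ^ (r * n) := by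
      apply neg_one_pow_congr
      have hr : r % 2 = r := by omega
      rw [Nat.mul_mod, Nat.mul_mod r n, hmod, hr]
    have : w * z - ((-1 : ℤ) ^ (pw * n)) • (z * w) ∈ S.C :=
      Submodule.subset_span ⟨pw, n, w, z, S.wd_G hw, hz, rfl⟩
    rwa [hsgn] at this
  · have hrw : (a + b) * z - ((-1 : ℤ) ^ (r * n)) • (z * (a + b)) =
        (a * z - ((-1 : ℤ) ^ (r * n)) • (z * a)) +
        (b * z - ((-1 : ℤ) ^ (r * n)) • (z * b)) := by
      simp only [add_mul, mul_add, smul_add]; abel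
    rw [hrw]; exact add_mem ha hb
  · have hrw : (c • a) * z - ((-1 : ℤ) ^ (r * n)) • (z * (c • a)) =
        c • (a * z - ((-1 : ℤ) ^ (r * n)) • (z * a)) := by
      simp only [smul_mul_assoc, mul_smul_comm, smul_sub]
      rw [smul_comm]
    rw [hrw]; exact Submodule.smul_mem _ c ha

theorem comm_sp_sp {r s : ℕ} {e f : Ω} (he : e ∈ S.SpP r) (hf : f ∈ S.SpP s) :
    e * f - ((-1 : ℤ) ^ (r * s)) • (f * e) ∈ S.C := by
  refine Submodule.span_induction (fun w hw => ?_) (by simpa using zero_mem S.C)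
    (fun a b _ _ ha hb => ?_) (fun c a _ ha => ?_) hf
  · obtain ⟨qw, hmod, hw⟩ := hw
    have hsgn : ((-1 : ℤ)) ^ (r * qw) = (-1) ^ (r * s) := by
      apply neg_one_pow_congr
      have hs : s % 2 = s := by omega
      rw [Nat.mul_mod, Nat.mul_mod r s, hmod, hs]
    have := S.comm_sp_G he (S.wd_G hw)
    rwa [hsgn] at this
  · have hrw : e * (a + b) - ((-1 : ℤ) ^ (r * s)) • ((a + b) * e) =
        (e * a - ((-1 : ℤ) ^ (r * s)) • (a * e)) +
        (e * b - ((-1 : ℤ) ^ (r * s)) • (b * e)) := by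
      simp only [add_mul, mul_add, smul_add]; abel
    rw [hrw]; exact add_mem ha hb
  · have hrw : e * (c • a) - ((-1 : ℤ) ^ (r * s)) • ((c • a) * e) =
        c • (e * a - ((-1 : ℤ) ^ (r * s)) • (a * e)) := by
      simp only [smul_mul_assoc, mul_smul_comm, smul_sub]
      rw [smul_comm]
    rw [hrw]; exact Submodule.smul_mem _ c ha

theorem comm_swap {t : ℕ} {x y : Ω} (h : x - ((-1 : ℤ) ^ t) • y ∈ S.C) :
    y - ((-1 : ℤ) ^ t) • x ∈ S.C := by
  have hσ : ((-1 : ℤ) ^ t) * ((-1) ^ t) = 1 := by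
    rw [← pow_add]
    exact Even.neg_one_pow ⟨t, rfl⟩
  have h2 : (-((-1 : ℤ) ^ t)) • (x - ((-1 : ℤ) ^ t) • y) ∈ S.C := zsmul_mem h _
  have he : y - ((-1 : ℤ) ^ t) • x = (-((-1 : ℤ) ^ t)) • (x - ((-1 : ℤ) ^ t) • y) := by
    rw [neg_smul, smul_sub, smul_smul, hσ, one_smul]
    abel
  rw [he]; exact h2

theorem decomp (m : ℕ) (y : Ω) :
    ∃ e o, y = e + o ∧ e ∈ S.SpP (m % 2) ∧ o ∈ S.SpP ((m + 1) % 2) := by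
  have hy : y ∈ S.SpP 0 ⊔ S.SpP 1 := by rw [S.sp_top]; trivial
  obtain ⟨p0, h0, p1, h1, hsum⟩ := Submodule.mem_sup.1 hy
  rcases Nat.mod_two_eq_zero_or_one m with h | h
  · exact ⟨p0, p1, hsum.symm, by rw [h]; exact h0, by rw [show (m+1)%2 = 1 by omega]; exact h1⟩
  · refine ⟨p1, p0, ?_, by rw [h]; exact h1, by rw [show (m+1)%2 = 0 by omega]; exact h0⟩
    rw [← hsum]; abel

theorem ann_basic {m : ℕ} {y e o : Ω} (hy : y ∈ S.G m) (hyeo : y = e + o)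
    (he : e ∈ S.SpP (m % 2)) (ho : o ∈ S.SpP ((m + 1) % 2)) :
    (∀ r, o * S.it r = 0) ∧ (∀ r, o * S.d r = 0) := by
  have hσ : ((-1 : ℤ)) ^ m = (-1) ^ (m % 2) := neg_one_pow_congr (by omega)
  constructor
  · intro r
    have E := S.hitder m y hy r
    rw [hyeo, add_mul, map_add, S.it_der_sp he r, S.it_der_sp ho r, map_add,
      add_mul, add_mul, smul_add, hσ, neg_one_pow_succ, neg_smul] at E
    have E0 := sub_eq_zero_of_eq E.symm
    have E2 : (2 : ℤ) • (((-1 : ℤ) ^ (m % 2)) • (o * S.it r)) = 0 := by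
      rw [← E0]; abel
    have E3 := S.two_cancel E2
    have E4 := congrArg (fun w => ((-1 : ℤ) ^ (m % 2)) • w) E3
    simpa [smul_smul, ← pow_add, Even.neg_one_pow (⟨m % 2, rfl⟩ : Even (m % 2 + m % 2))]
      using E4
  · intro r
    have E := S.hleib m y hy r
    rw [hyeo, add_mul, map_add, S.d_der_sp' he r, S.d_der_sp' ho r, map_add,
      add_mul, add_mul, smul_add, hσ, neg_one_pow_succ, neg_smul] at E
    have E0 := sub_eq_zero_of_eq E.symm
    have E2 : (2 : ℤ) • (((-1 : ℤ) ^ (m % 2)) • (o * S.d r)) = 0 := by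
      rw [← E0]; abel
    have E3 := S.two_cancel E2
    have E4 := congrArg (fun w => ((-1 : ℤ) ^ (m % 2)) • w) E3
    simpa [smul_smul, ← pow_add, Even.neg_one_pow (⟨m % 2, rfl⟩ : Even (m % 2 + m % 2))]
      using E4

theorem ann_ext {m : ℕ} {y e o : Ω} (hy : y ∈ S.G m) (hyeo : y = e + o)
    (he : e ∈ S.SpP (m % 2)) (ho : o ∈ S.SpP ((m + 1) % 2)) :
    (∀ x r, o * (x * S.it r) = 0) ∧ (∀ x r, o * (x * S.d r) = 0) := by
  have hword : ∀ q : ℕ, ∀ w ∈ S.Wd q, (∀ r, (o * w) * S.it r = 0) ∧ (∀ r, (o * w) * S.d r = 0) := by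
    intro q w hw
    have hyG : y * w ∈ S.G (m + q) := S.hGmul m q y hy w (S.wd_G hw)
    have hsplit : y * w = e * w + o * w := by rw [hyeo, add_mul]
    have heG : e * w ∈ S.SpP ((m + q) % 2) := by
      have := S.sp_mul_word he hw
      rwa [show (m % 2 + q) % 2 = (m + q) % 2 by omega] at this
    have hoG : o * w ∈ S.SpP ((m + q + 1) % 2) := by
      have := S.sp_mul_word ho hw
      rwa [show ((m + 1) % 2 + q) % 2 = (m + q + 1) % 2 by omega] at this
    exact S.ann_basic hyG hsplit heG hoG
  have hmain : ∀ x : Ω, (∀ r, o * (x * S.it r) = 0) ∧ (∀ r, o * (x * S.d r) = 0) := by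
    intro x
    have hx : x ∈ Submodule.span k {w : Ω | ∃ n, w ∈ S.Wd n} := by
      rw [S.wd_top]; trivial
    refine Submodule.span_induction (fun w hw => ?_) (by simp) (fun a b _ _ ha hb => ?_)
      (fun c a _ ha => ?_) hx
    · obtain ⟨q, hw⟩ := hw
      obtain ⟨h1, h2⟩ := hword q w hw
      constructor
      · intro r; rw [← mul_assoc]; exact h1 r
      · intro r; rw [← mul_assoc]; exact h2 r
    · constructor
      · intro r; rw [add_mul, mul_add, ha.1 r, hb.1 r, add_zero]
      · intro r; rw [add_mul, mul_add, ha.2 r, hb.2 r, add_zero]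
    · constructor
      · intro r; rw [smul_mul_assoc, mul_smul_comm, ha.1 r, smul_zero]
      · intro r; rw [smul_mul_assoc, mul_smul_comm, ha.2 r, smul_zero]
  exact ⟨fun x r => (hmain x).1 r, fun x r => (hmain x).2 r⟩

theorem v_ann {s : ℕ} {o : Ω} (ho : o ∈ S.SpP s)
    (h1 : ∀ x r, o * (x * S.it r) = 0) (h2 : ∀ x r, o * (x * S.d r) = 0) :
    (∀ x r, S.it o * (x * S.it r) = 0) ∧ (∀ x r, S.it o * (x * S.d r) = 0) := by
  have ho_it : ∀ w : Ω, o * S.it w = 0 := by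
    intro w
    have := h1 1 w
    rwa [one_mul] at this
  constructor
  · intro x r
    have hder := S.it_der_sp ho (x * S.it r)
    rw [h1 x r, map_zero, ho_it, smul_zero, add_zero] at hder
    exact hder.symm
  · intro x r
    have hder := S.it_der_sp ho (x * S.d r)
    rw [h2 x r, map_zero, ho_it, smul_zero, add_zero] at hder
    exact hder.symm

theorem v_kill {v : Ω} (hvd : ∀ x r, v * (x * S.d r) = 0) :
    ∀ e ∈ S.SpP 1, ∀ x : Ω, v * (x * e) = 0 := by
  have key : ∀ L : List (Ω × ℕ), (∀ p ∈ L, S.Lok p) → ((L.map Prod.snd).sum) % 2 = 1 →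
      ∀ x : Ω, v * (x * (L.map Prod.fst).prod) = 0 := by
    intro L
    induction L with
    | nil => intro _ h; simp at h
    | cons p L ih =>
      intro hL hpar x
      simp only [List.map_cons, List.prod_cons, List.sum_cons] at hpar ⊢
      rcases hL p (List.mem_cons_self (a := p) (l := L)) with ⟨h2, h1⟩ | ⟨h2, a, h1⟩
      · rw [← mul_assoc x]
        exact ih (fun q hq => hL q (List.mem_cons_of_mem p hq)) (by omega) (x * p.1)
      · rw [h1]
        set u := (L.map Prod.fst).prod
        have hsplit : S.d (S.ι a) * u = S.d (S.ι a * u) - S.ι a * S.d u := by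
          rw [S.hleib 0 _ (S.hι0 a) u]
          simp
        rw [hsplit, mul_sub, mul_sub, ← mul_assoc x (S.ι a), hvd x (S.ι a * u),
          hvd (x * S.ι a) u, sub_zero]
  intro e he x
  refine Submodule.span_induction (fun w hw => ?_) (by simp) (fun a b _ _ ha hb => ?_)
    (fun c a _ ha => ?_) he
  · obtain ⟨nw, hmod, L, hL, rfl, rfl⟩ := hw
    exact key L hL (by omega) x
  · rw [mul_add, mul_add, ha, hb, add_zero]
  · rw [mul_smul_comm, mul_smul_comm, ha, smul_zero]

theorem sgn_mul_congr {p q : ℕ} (h : p % 2 = q % 2) (n : ℕ) :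
    ((p * n) % 2) = ((q * n) % 2) := by
  rw [Nat.mul_mod, Nat.mul_mod q, h]

theorem odd_mul_v {s : ℕ} {v : Ω} (hv : v ∈ S.SpP s) (hvD : ∀ x r, v * (x * S.d r) = 0)
    {e : Ω} (he : e ∈ S.SpP 1) : e * v ∈ S.C := by
  have h0 : v * e = 0 := by
    have := S.v_kill hvD e he 1
    rwa [one_mul] at this
  have := S.comm_sp_sp he hv
  rwa [h0, smul_zero, sub_zero] at this

theorem claim1 : ∀ x : Ω, S.it (S.it x) = 0 := by
  intro x
  have hx : x ∈ Submodule.span k {w : Ω | ∃ n, w ∈ S.Wd n} := by rw [S.wd_top]; trivial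
  refine Submodule.span_induction (fun w hw => ?_) (by simp) (fun a b _ _ ha hb => ?_)
    (fun c a _ ha => ?_) hx
  · obtain ⟨n, L, hL, rfl, rfl⟩ := hw
    exact (S.word_main L hL).2.1
  · rw [map_add, map_add, ha, hb, add_zero]
  · rw [map_smul, map_smul, ha, smul_zero]

theorem cartan : ∀ x : Ω, S.d (S.it x) + S.it (S.d x) = x * S.T - S.T * x := by
  intro x
  have hx : x ∈ Submodule.span k {w : Ω | ∃ n, w ∈ S.Wd n} := by rw [S.wd_top]; trivial
  refine Submodule.span_induction (fun w hw => ?_) (by simp) (fun a b _ _ ha hb => ?_)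
    (fun c a _ ha => ?_) hx
  · obtain ⟨n, L, hL, rfl, rfl⟩ := hw
    exact (S.word_main L hL).2.2.1
  · rw [map_add, map_add, map_add, map_add]
    have hr : (a + b) * S.T - S.T * (a + b) =
        (a * S.T - S.T * a) + (b * S.T - S.T * b) := by noncomm_ring
    rw [hr, ← ha, ← hb]; abel
  · rw [map_smul, map_smul, map_smul, map_smul, ← smul_add, ha, smul_sub,
      smul_mul_assoc, mul_smul_comm]

theorem commT_mem : ∀ x : Ω, x * S.T - S.T * x ∈ S.C := by
  intro x
  have hx : x ∈ Submodule.span k (⋃ n, (S.G n : Set Ω)) := by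
    rw [Submodule.span_iUnion]
    simp only [Submodule.span_eq]
    rw [S.hsup]; trivial
  refine Submodule.span_induction (fun w hw => ?_) (by simpa using zero_mem S.C)
    (fun a b _ _ ha hb => ?_) (fun c a _ ha => ?_) hx
  · obtain ⟨Gn, ⟨n, rfl⟩, hw⟩ := hw
    have : w * S.T - ((-1 : ℤ) ^ (n * 0)) • (S.T * w) ∈ S.C :=
      Submodule.subset_span ⟨n, 0, w, S.T, hw, S.hT0, rfl⟩
    simpa using this
  · have hr : (a + b) * S.T - S.T * (a + b) =
        (a * S.T - S.T * a) + (b * S.T - S.T * b) := by noncomm_ring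
    rw [hr]; exact add_mem ha hb
  · have hr : (c • a) * S.T - S.T * (c • a) = c • (a * S.T - S.T * a) := by
      rw [smul_sub, smul_mul_assoc, mul_smul_comm]
    rw [hr]; exact Submodule.smul_mem _ c ha

theorem claim3 : ∀ x : Ω, S.d (S.it x) + S.it (S.d x) ∈ S.C := by
  intro x
  rw [S.cartan x]
  exact S.commT_mem x

theorem claim2 : ∀ x ∈ S.C, S.it x ∈ S.C := by
  intro x hx
  refine Submodule.span_induction (fun c hc => ?_) (by rw [map_zero]; exact zero_mem _)
    (fun a b _ _ ha hb => by rw [map_add]; exact add_mem ha hb)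
    (fun t a _ ha => by rw [map_smul]; exact Submodule.smul_mem _ t ha) hx
  obtain ⟨m, n, y, z, hy, hz, rfl⟩ := hc
  obtain ⟨ey, oy, hyd, hey, hoy⟩ := S.decomp m y
  obtain ⟨ez, oz, hzd, hez, hoz⟩ := S.decomp n z
  obtain ⟨hoyI, hoyD⟩ := S.ann_ext hy hyd hey hoy
  obtain ⟨hozI, hozD⟩ := S.ann_ext hz hzd hez hoz
  obtain ⟨hvyI, hvyD⟩ := S.v_ann hoy hoyI hoyD
  obtain ⟨hvzI, hvzD⟩ := S.v_ann hoz hozI hozD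
  have hity : S.it y = S.it ey + S.it oy := by rw [hyd, map_add]
  have hitz : S.it z = S.it ez + S.it oz := by rw [hzd, map_add]
  have h_ey : S.it ey ∈ S.SpP ((m % 2 + 1) % 2) := S.it_sp hey
  have h_vy : S.it oy ∈ S.SpP (m % 2) := by
    have := S.it_sp hoy
    rwa [show ((m + 1) % 2 + 1) % 2 = m % 2 by omega] at this
  have h_ez : S.it ez ∈ S.SpP ((n % 2 + 1) % 2) := S.it_sp hez
  have h_vz : S.it oz ∈ S.SpP (n % 2) := by
    have := S.it_sp hoz
    rwa [show ((n + 1) % 2 + 1) % 2 = n % 2 by omega] at this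
  -- the two genuinely hard memberships
  have hzvy : n % 2 = 1 → z * S.it oy ∈ S.C := by
    intro hn
    have hoz_vy : oz * S.it oy = 0 := by
      have := hozI 1 oy
      rwa [one_mul] at this
    have hez_vy : ez * S.it oy ∈ S.C := by
      refine S.odd_mul_v h_vy hvyD ?_
      rwa [hn] at hez
    rw [hzd, add_mul, hoz_vy, add_zero]
    exact hez_vy
  have hvzy : m % 2 = 1 → S.it oz * y ∈ S.C := by
    intro hm
    have h1 : S.it oz * ey = 0 := by
      have hey1 : ey ∈ S.SpP 1 := by rwa [hm] at hey
      have := S.v_kill hvzD ey hey1 1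
      rwa [one_mul] at this
    have h2 : S.it oz * oy ∈ S.C := by
      have hC := S.comm_sp_sp h_vz hoy
      have hoy_vz : oy * S.it oz = 0 := by
        have := hoyI 1 oz
        rwa [one_mul] at this
      rwa [hoy_vz, smul_zero, sub_zero] at hC
    rw [hyd, mul_add, h1, zero_add]
    exact h2
  -- four main commutator memberships with normalized exponents
  have N1 : S.it ey * z - ((-1 : ℤ) ^ (m * n + n)) • (z * S.it ey) ∈ S.C := by
    have hC := S.comm_sp_G h_ey hz
    rwa [neg_one_pow_congr (p := (m % 2 + 1) % 2 * n) (q := m * n + n)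
      (by
        have h1 : ((m % 2 + 1) % 2 * n) % 2 = ((m + 1) * n) % 2 :=
          sgn_mul_congr (by omega) n
        have h2 : (m + 1) * n = m * n + n := by ring
        rw [h1, h2])] at hC
  have N2 : S.it oy * z - ((-1 : ℤ) ^ (m * n + n)) • (z * S.it oy) ∈ S.C := by
    have M2 : S.it oy * z - ((-1 : ℤ) ^ (m * n)) • (z * S.it oy) ∈ S.C := by
      have hC := S.comm_sp_G h_vy hz
      rwa [neg_one_pow_congr (p := m % 2 * n) (q := m * n)
        (sgn_mul_congr (by omega) n)] at hC
    have W2 : (((-1 : ℤ) ^ (m * n)) - ((-1 : ℤ) ^ (m * n + n))) • (z * S.it oy) ∈ S.C := by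
      rcases Nat.mod_two_eq_zero_or_one n with hn | hn
      · rw [show ((-1 : ℤ) ^ (m * n + n)) = ((-1 : ℤ) ^ (m * n)) from
          neg_one_pow_congr (by omega), sub_self, zero_smul]
        exact zero_mem _
      · exact zsmul_mem (hzvy hn) _
    have hkey : S.it oy * z - ((-1 : ℤ) ^ (m * n + n)) • (z * S.it oy) =
        (S.it oy * z - ((-1 : ℤ) ^ (m * n)) • (z * S.it oy)) +
        (((-1 : ℤ) ^ (m * n)) - ((-1 : ℤ) ^ (m * n + n))) • (z * S.it oy) := by
      module
    rw [hkey]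
    exact add_mem M2 W2
  have N3 : ((-1 : ℤ) ^ m) • (y * S.it ez) - ((-1 : ℤ) ^ (m * n)) • (S.it ez * y) ∈ S.C := by
    have M3 : y * S.it ez - ((-1 : ℤ) ^ (m * n + m)) • (S.it ez * y) ∈ S.C := by
      have hC := S.comm_sp_G h_ez hy
      rw [neg_one_pow_congr (p := (n % 2 + 1) % 2 * m) (q := m * n + m)
        (by
          have h1 : ((n % 2 + 1) % 2 * m) % 2 = ((n + 1) * m) % 2 :=
            sgn_mul_congr (by omega) m
          have h2 : (n + 1) * m = m * n + m := by ring
          rw [h1, h2])] at hC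
      exact S.comm_swap hC
    have := zsmul_mem M3 ((-1 : ℤ) ^ m)
    rw [smul_sub, smul_smul, ← pow_add,
      neg_one_pow_congr (p := m + (m * n + m)) (q := m * n) (by omega)] at this
    exact this
  have N4 : ((-1 : ℤ) ^ m) • (y * S.it oz) - ((-1 : ℤ) ^ (m * n)) • (S.it oz * y) ∈ S.C := by
    have M4 : y * S.it oz - ((-1 : ℤ) ^ (m * n)) • (S.it oz * y) ∈ S.C := by
      have hC := S.comm_sp_G h_vz hy
      rw [neg_one_pow_congr (p := n % 2 * m) (q := m * n)
        (by
          have h1 : (n % 2 * m) % 2 = (n * m) % 2 := sgn_mul_congr (by omega) m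
          have h2 : n * m = m * n := by ring
          rw [h1, h2])] at hC
      exact S.comm_swap hC
    have M4' := zsmul_mem M4 ((-1 : ℤ) ^ m)
    rw [smul_sub, smul_smul, ← pow_add] at M4'
    have W4 : (((-1 : ℤ) ^ (m + m * n)) - ((-1 : ℤ) ^ (m * n))) • (S.it oz * y) ∈ S.C := by
      rcases Nat.mod_two_eq_zero_or_one m with hm | hm
      · rw [show ((-1 : ℤ) ^ (m + m * n)) = ((-1 : ℤ) ^ (m * n)) from
          neg_one_pow_congr (by omega), sub_self, zero_smul]
        exact zero_mem _
      · exact zsmul_mem (hvzy hm) _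
    have hkey : ((-1 : ℤ) ^ m) • (y * S.it oz) - ((-1 : ℤ) ^ (m * n)) • (S.it oz * y) =
        (((-1 : ℤ) ^ m) • (y * S.it oz) - ((-1 : ℤ) ^ (m + m * n)) • (S.it oz * y)) +
        (((-1 : ℤ) ^ (m + m * n)) - ((-1 : ℤ) ^ (m * n))) • (S.it oz * y) := by
      module
    rw [hkey]
    exact add_mem M4' W4
  -- assemble
  have hmem : (S.it ey * z - ((-1 : ℤ) ^ (m * n + n)) • (z * S.it ey)) +
      (S.it oy * z - ((-1 : ℤ) ^ (m * n + n)) • (z * S.it oy)) +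
      (((-1 : ℤ) ^ m) • (y * S.it ez) - ((-1 : ℤ) ^ (m * n)) • (S.it ez * y)) +
      (((-1 : ℤ) ^ m) • (y * S.it oz) - ((-1 : ℤ) ^ (m * n)) • (S.it oz * y)) ∈ S.C :=
    add_mem (add_mem (add_mem N1 N2) N3) N4
  rw [map_sub, map_zsmul, S.hitder m y hy z, S.hitder n z hz y, hity, hitz]
  simp only [add_mul, mul_add, smul_add]
  convert hmem using 1
  module

end Setup
end Stmt16



/-- on the extended forms algebra `Ω_t = Ω A ∗_k k[t]`, the
super-derivation `i_t` (with `i_t t = 0`, `i_t a = 0` for `a ∈ A`, and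
`i_t (da) = [a,t] = at − ta`) satisfies `i_t² = 0` on `Ω_t`, descends to the
commutator quotient `DR_t = Ω_t/[Ω_t,Ω_t]`, and anticommutes there with the
de Rham differential `d` (which kills `t`): `d∘i_t + i_t∘d = 0` on `DR_t`.
The algebra `Ω_t` is axiomatized: a graded `k`-algebra generated by `ι(A)`,
`d(ι(A))` and the degree-0 element `T`, with `d` a square-zero super-derivation. -/
theorem stmt_16 {k A Ω : Type} [CommRing k] [Algebra ℚ k]
    [Ring A] [Algebra k A] [Ring Ω] [Algebra k Ω]
    (ι : A →ₐ[k] Ω) (T : Ω) (d : Ω →ₗ[k] Ω) (G : ℕ → Submodule k Ω)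
    (hsplit : ∃ p : A →ₗ[k] k, ∀ c : k, p (algebraMap k A c) = c)
    (hι0 : ∀ a : A, ι a ∈ G 0)
    (hT0 : T ∈ G 0)
    (hGmul : ∀ m n : ℕ, ∀ x ∈ G m, ∀ y ∈ G n, x * y ∈ G (m + n))
    (hdG : ∀ n : ℕ, ∀ x ∈ G n, d x ∈ G (n + 1))
    (hdd : ∀ x : Ω, d (d x) = 0)
    (hdT : d T = 0)
    (hleib : ∀ (m : ℕ) (x : Ω), x ∈ G m → ∀ y : Ω,
      d (x * y) = d x * y + ((-1 : ℤ) ^ m) • (x * d y))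
    -- Ω_t is spanned by words in the letters T, ι(a), d(ι(a))
    (htop : Submodule.span k {w : Ω | ∃ L : List Ω,
        (∀ z ∈ L, z = T ∨ (∃ a : A, z = ι a) ∨ ∃ a : A, z = d (ι a)) ∧
        w = L.prod} = ⊤)
    (hsup : (⨆ n, G n) = ⊤)
    -- the contraction i_t: the super-derivation with the prescribed values on generators
    (it : Ω →ₗ[k] Ω)
    (hitT : it T = 0)
    (hitι : ∀ a : A, it (ι a) = 0)
    (hitd : ∀ a : A, it (d (ι a)) = ι a * T - T * ι a)
    (hitder : ∀ (m : ℕ) (x : Ω), x ∈ G m → ∀ y : Ω,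
      it (x * y) = it x * y + ((-1 : ℤ) ^ m) • (x * it y)) :
    -- i_t² = 0 on Ω_t
    (∀ x : Ω, it (it x) = 0) ∧
    -- i_t descends to DR_t = Ω_t/[Ω_t,Ω_t]
    (∀ x ∈ Submodule.span k {c : Ω | ∃ (m n : ℕ) (y z : Ω),
        y ∈ G m ∧ z ∈ G n ∧ c = y * z - ((-1 : ℤ) ^ (m * n)) • (z * y)},
      it x ∈ Submodule.span k {c : Ω | ∃ (m n : ℕ) (y z : Ω),
        y ∈ G m ∧ z ∈ G n ∧ c = y * z - ((-1 : ℤ) ^ (m * n)) • (z * y)}) ∧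
    -- d∘i_t + i_t∘d = 0 on DR_t
    (∀ x : Ω, d (it x) + it (d x) ∈ Submodule.span k {c : Ω | ∃ (m n : ℕ) (y z : Ω),
        y ∈ G m ∧ z ∈ G n ∧ c = y * z - ((-1 : ℤ) ^ (m * n)) • (z * y)}) := by
  
  let S : Stmt16.Setup k A Ω :=
    { ι := ι, T := T, d := d, G := G, it := it, hι0 := hι0, hT0 := hT0,
      hGmul := hGmul, hdG := hdG, hdd := hdd, hdT := hdT, hleib := hleib,
      htop := htop, hsup := hsup, hitT := hitT, hitι := hitι, hitd := hitd,
      hitder := hitder }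
  exact ⟨S.claim1, S.claim2, S.claim3⟩
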